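/- Let V be a finite-dimensional real inner product space and let 𝔤 ⊆ End(V) be a linear subspace that is closed under taking adjoints and whose first prolongation vanishes, i.e. the only linear map τ : V → 𝔤 with τ(u)v = τ(v)u for all u,v ∈ V is τ = 0. Define W = {T ∈ A²(V;V) : trace(A ∘ T(v,·)) = 0 for every A ∈ 𝔤 and every v ∈ V}, where T(v,·) is the endomorphism w ↦ T(v,w). Then A²(V;V) is the internal direct sum of δ(Hom(V,𝔤)) and W: every T ∈ A²(V;V) can be written uniquely as T = δτ + T̃ with τ ∈ Hom(V,𝔤) and T̃ ∈ W. -/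

import Mathlib

open scoped RealInnerProductSpace

open Finset

set_option linter.unusedSectionVars false

namespace DSATC

variable {V : Type*} [NormedAddCommGroup V] [InnerProductSpace ℝ V] [FiniteDimensional ℝ V]

lemma alt_swap {S : V →ₗ[ℝ] V →ₗ[ℝ] V} (hS : ∀ v, S v v = 0) (u v : V) :
    S v u = - S u v := by
  have h := hS (u + v)
  simp only [map_add, LinearMap.add_apply, hS u, hS v, zero_add, add_zero] at h
  linear_combination (norm := abel) h

noncomputable def delta (g : Submodule ℝ (V →ₗ[ℝ] V)) :
    (V →ₗ[ℝ] g) →ₗ[ℝ] (V →ₗ[ℝ] V →ₗ[ℝ] V) where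
  toFun σ := LinearMap.mk₂ ℝ (fun u v => (σ u : V →ₗ[ℝ] V) v - (σ v : V →ₗ[ℝ] V) u)
    (fun u u' v => by
      simp only [map_add, Submodule.coe_add, LinearMap.add_apply, LinearMap.map_add]; abel)
    (fun c u v => by
      simp only [map_smul, Submodule.coe_smul, LinearMap.smul_apply, LinearMap.map_smul,
        smul_sub])
    (fun u v v' => by
      simp only [map_add, Submodule.coe_add, LinearMap.add_apply, LinearMap.map_add]; abel)
    (fun c u v => by
      simp only [map_smul, Submodule.coe_smul, LinearMap.smul_apply, LinearMap.map_smul,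
        smul_sub])
  map_add' σ σ' := by
    ext u v
    simp only [LinearMap.mk₂_apply, LinearMap.add_apply, Submodule.coe_add]; abel
  map_smul' c σ := by
    ext u v
    simp only [LinearMap.mk₂_apply, LinearMap.smul_apply, Submodule.coe_smul,
      RingHom.id_apply, smul_sub]

@[simp] lemma delta_apply (g : Submodule ℝ (V →ₗ[ℝ] V)) (σ : V →ₗ[ℝ] g) (u v : V) :
    delta g σ u v = (σ u : V →ₗ[ℝ] V) v - (σ v : V →ₗ[ℝ] V) u := rfl

variable {ι : Type*} [Fintype ι] (b : OrthonormalBasis ι ℝ V)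

lemma trace_onb (M : V →ₗ[ℝ] V) :
    LinearMap.trace ℝ V M = ∑ i, ⟪b i, M (b i)⟫ := by
  classical
  rw [LinearMap.trace_eq_matrix_trace ℝ b.toBasis]
  simp [Matrix.trace, LinearMap.toMatrix_apply, OrthonormalBasis.coe_toBasis,
    OrthonormalBasis.coe_toBasis_repr_apply, OrthonormalBasis.repr_apply_apply]

lemma sum_inner_eq_trace (A M : V →ₗ[ℝ] V) :
    ∑ i, ⟪A (b i), M (b i)⟫ = LinearMap.trace ℝ V (LinearMap.adjoint A ∘ₗ M) := by
  rw [trace_onb b]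
  simp [LinearMap.adjoint_inner_right]

noncomputable def eta (g : Submodule ℝ (V →ₗ[ℝ] V)) :
    (V →ₗ[ℝ] V →ₗ[ℝ] V) →ₗ[ℝ] Module.Dual ℝ (V →ₗ[ℝ] g) where
  toFun T :=
    { toFun := fun σ => ∑ i, ∑ j, ⟪(σ (b i) : V →ₗ[ℝ] V) (b j), T (b i) (b j)⟫
      map_add' := fun σ σ' => by
        simp [inner_add_left, Finset.sum_add_distrib]
      map_smul' := fun c σ => by
        simp [real_inner_smul_left, Finset.mul_sum] }
  map_add' T T' := by
    ext σ
    simp [inner_add_right, Finset.sum_add_distrib]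
  map_smul' c T := by
    ext σ
    simp [real_inner_smul_right, Finset.mul_sum]

@[simp] lemma eta_apply (g : Submodule ℝ (V →ₗ[ℝ] V)) (T : V →ₗ[ℝ] V →ₗ[ℝ] V)
    (σ : V →ₗ[ℝ] g) :
    eta b g T σ = ∑ i, ∑ j, ⟪(σ (b i) : V →ₗ[ℝ] V) (b j), T (b i) (b j)⟫ := rfl

lemma eta_eq_zero_of_trace {g : Submodule ℝ (V →ₗ[ℝ] V)}
    (hadj : ∀ A ∈ g, LinearMap.adjoint A ∈ g) {T : V →ₗ[ℝ] V →ₗ[ℝ] V}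
    (h : ∀ A ∈ g, ∀ v, LinearMap.trace ℝ V (A ∘ₗ T v) = 0) :
    eta b g T = 0 := by
  ext σ
  rw [eta_apply, LinearMap.zero_apply]
  refine Finset.sum_eq_zero fun i _ => ?_
  rw [sum_inner_eq_trace b]
  exact h _ (hadj _ (σ (b i)).2) (b i)

lemma trace_eq_zero_of_eta {g : Submodule ℝ (V →ₗ[ℝ] V)}
    (hadj : ∀ A ∈ g, LinearMap.adjoint A ∈ g) {T : V →ₗ[ℝ] V →ₗ[ℝ] V}
    (h : eta b g T = 0) :
    ∀ A ∈ g, ∀ v, LinearMap.trace ℝ V (A ∘ₗ T v) = 0 := by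
  classical
  intro A hA v
  have key : ∀ k, LinearMap.trace ℝ V (A ∘ₗ T (b k)) = 0 := by
    intro k
    set σ : V →ₗ[ℝ] g :=
      LinearMap.smulRight (innerₛₗ ℝ (b k)) (⟨LinearMap.adjoint A, hadj A hA⟩ : g) with hσ
    have h0 : eta b g T σ = 0 := by rw [h]; rfl
    rw [eta_apply] at h0
    have hterm : ∀ i j, ⟪(σ (b i) : V →ₗ[ℝ] V) (b j), T (b i) (b j)⟫
        = (if k = i then (1:ℝ) else 0) * ⟪LinearMap.adjoint A (b j), T (b i) (b j)⟫ := by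
      intro i j
      have hni : ⟪b k, b i⟫ = if k = i then (1:ℝ) else 0 :=
        orthonormal_iff_ite.mp b.orthonormal k i
      rw [hσ]
      simp only [LinearMap.smulRight_apply, innerₛₗ_apply_apply, hni, ite_smul, one_smul, zero_smul]
      split_ifs <;> simp
    simp only [hterm, ite_mul, one_mul, zero_mul] at h0
    rw [Finset.sum_comm] at h0
    simp only [Finset.sum_ite_eq, Finset.mem_univ, if_true] at h0
    rw [sum_inner_eq_trace b, LinearMap.adjoint_adjoint] at h0
    exact h0
  set L : V →ₗ[ℝ] ℝ :=
    (LinearMap.trace ℝ V) ∘ₗ ((LinearMap.llcomp ℝ V V V A) ∘ₗ T) with hL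
  have hL0 : L = 0 := b.toBasis.ext fun i => by
    simpa [hL, OrthonormalBasis.coe_toBasis, LinearMap.llcomp_apply'] using key i
  have := LinearMap.congr_fun hL0 v
  simpa [hL, LinearMap.llcomp_apply'] using this

lemma swap_identity {g : Submodule ℝ (V →ₗ[ℝ] V)} (σ : V →ₗ[ℝ] g)
    {S : V →ₗ[ℝ] V →ₗ[ℝ] V} (hS : ∀ v, S v v = 0) :
    ∑ i, ∑ j, ⟪delta g σ (b i) (b j), S (b i) (b j)⟫ = 2 * eta b g S σ := by
  have h1 : ∀ i j, ⟪delta g σ (b i) (b j), S (b i) (b j)⟫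
      = ⟪(σ (b i) : V →ₗ[ℝ] V) (b j), S (b i) (b j)⟫
        - ⟪(σ (b j) : V →ₗ[ℝ] V) (b i), S (b i) (b j)⟫ := by
    intro i j; rw [delta_apply, inner_sub_left]
  simp only [h1, Finset.sum_sub_distrib]
  have h2 : ∑ i, ∑ j, ⟪(σ (b j) : V →ₗ[ℝ] V) (b i), S (b i) (b j)⟫
      = - ∑ i, ∑ j, ⟪(σ (b i) : V →ₗ[ℝ] V) (b j), S (b i) (b j)⟫ := by
    rw [Finset.sum_comm, ← Finset.sum_neg_distrib]
    refine Finset.sum_congr rfl fun i _ => ?_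
    rw [← Finset.sum_neg_distrib]
    refine Finset.sum_congr rfl fun j _ => ?_
    rw [alt_swap hS (b i) (b j), inner_neg_right]
  rw [h2, eta_apply]; ring


lemma sigma_eq_zero {g : Submodule ℝ (V →ₗ[ℝ] V)}
    (hprol : ∀ τ : V →ₗ[ℝ] (V →ₗ[ℝ] V),
      (∀ u : V, τ u ∈ g) → (∀ u v : V, τ u v = τ v u) → τ = 0)
    (σ : V →ₗ[ℝ] g) (h : eta b g (delta g σ) σ = 0) : σ = 0 := by
  have hS : ∀ v, delta g σ v v = 0 := fun v => by simp
  have hsum := swap_identity b σ hS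
  rw [h, mul_zero] at hsum
  have hzero : ∀ i ∈ (univ : Finset ι), ∀ j ∈ (univ : Finset ι),
      ⟪delta g σ (b i) (b j), delta g σ (b i) (b j)⟫ = 0 := by
    have h1 := (Finset.sum_eq_zero_iff_of_nonneg (fun i _ =>
      Finset.sum_nonneg (fun j _ => real_inner_self_nonneg))).mp hsum
    intro i hi j hj
    exact (Finset.sum_eq_zero_iff_of_nonneg (fun j _ => real_inner_self_nonneg)).mp
      (h1 i hi) j hj
  have hd : delta g σ = 0 := by
    apply b.toBasis.ext; intro i
    apply b.toBasis.ext; intro j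
    simp only [OrthonormalBasis.coe_toBasis, LinearMap.zero_apply]
    exact inner_self_eq_zero.mp (hzero i (Finset.mem_univ i) j (Finset.mem_univ j))
  have hτ : (g.subtype ∘ₗ σ) = 0 := by
    apply hprol
    · intro u; exact (σ u).2
    · intro u v
      have := LinearMap.congr_fun (LinearMap.congr_fun hd u) v
      simp only [delta_apply, LinearMap.zero_apply] at this
      simpa [sub_eq_zero] using this
  refine LinearMap.ext fun u => ?_
  have := LinearMap.congr_fun hτ u
  rw [LinearMap.comp_apply, LinearMap.zero_apply, Submodule.subtype_apply] at this
  exact Subtype.ext (by simp [this])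

lemma G_surjective {g : Submodule ℝ (V →ₗ[ℝ] V)}
    (hprol : ∀ τ : V →ₗ[ℝ] (V →ₗ[ℝ] V),
      (∀ u : V, τ u ∈ g) → (∀ u v : V, τ u v = τ v u) → τ = 0) :
    Function.Surjective ((eta b g) ∘ₗ (delta g)) := by
  have hinj : Function.Injective ((eta b g) ∘ₗ (delta g)) := by
    refine (injective_iff_map_eq_zero _).mpr fun σ hσ => ?_
    apply sigma_eq_zero b hprol
    rw [LinearMap.comp_apply] at hσ
    rw [hσ]; rfl
  haveI hfd : FiniteDimensional ℝ (Module.Dual ℝ (V →ₗ[ℝ] g)) := by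
    exact Subspace.instModuleDualFiniteDimensional (K := ℝ) (V := V →ₗ[ℝ] g)
  have hdim : Module.finrank ℝ (V →ₗ[ℝ] g) =
      Module.finrank ℝ (Module.Dual ℝ (V →ₗ[ℝ] g)) :=
    (Subspace.dual_finrank_eq (K := ℝ) (V := V →ₗ[ℝ] g)).symm
  exact (@LinearMap.injective_iff_surjective_of_finrank_eq_finrank ℝ (V →ₗ[ℝ] g) _
    LinearMap.addCommGroup _ (Module.Dual ℝ (V →ₗ[ℝ] g)) LinearMap.addCommGroup _ _ _ hdim
    ((eta b g) ∘ₗ (delta g))).mp hinj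

end DSATC

open scoped RealInnerProductSpace

/-- Let `V` be a finite-dimensional real inner product space and
`𝔤 ⊆ End(V)` a linear subspace closed under adjoints whose first prolongation vanishes
(the only linear `τ : V → 𝔤` with `τ(u)v = τ(v)u` for all `u, v` is `τ = 0`).  With
`W = {T ∈ A²(V;V) : trace(A ∘ T(v,·)) = 0 for all A ∈ 𝔤, v ∈ V}`, every alternating
bilinear `T : V × V → V` decomposes uniquely as `T = δτ + T̃` with `τ ∈ Hom(V,𝔤)` and
`T̃ ∈ W`. -/
theorem direct_sum_alternation_trace_complement
    {V : Type*} [NormedAddCommGroup V] [InnerProductSpace ℝ V] [FiniteDimensional ℝ V]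
    (g : Submodule ℝ (V →ₗ[ℝ] V))
    (hadj : ∀ A ∈ g, LinearMap.adjoint A ∈ g)
    (hprol : ∀ τ : V →ₗ[ℝ] (V →ₗ[ℝ] V),
      (∀ u : V, τ u ∈ g) → (∀ u v : V, τ u v = τ v u) → τ = 0)
    (T : V →ₗ[ℝ] V →ₗ[ℝ] V) (hT : ∀ v : V, T v v = 0) :
    ∃! p : (V →ₗ[ℝ] (V →ₗ[ℝ] V)) × (V →ₗ[ℝ] V →ₗ[ℝ] V),
      (∀ u : V, p.1 u ∈ g) ∧
      (∀ v : V, p.2 v v = 0) ∧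
      (∀ A ∈ g, ∀ v : V, LinearMap.trace ℝ V (A ∘ₗ p.2 v) = 0) ∧
      (∀ u v : V, T u v = (p.1 u v - p.1 v u) + p.2 u v) := by
  classical
  set b := stdOrthonormalBasis ℝ V with hb
  obtain ⟨σ, hσ⟩ := DSATC.G_surjective b hprol (DSATC.eta b g T)
  rw [LinearMap.comp_apply] at hσ
  set τ : V →ₗ[ℝ] (V →ₗ[ℝ] V) := g.subtype ∘ₗ σ with hτdef
  set Tt : V →ₗ[ℝ] V →ₗ[ℝ] V := T - DSATC.delta g σ with hTtdef
  have hτ_apply : ∀ u v : V, τ u v = (σ u : V →ₗ[ℝ] V) v := fun u v => rfl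
  have hTt_apply : ∀ u v : V, Tt u v = T u v - ((σ u : V →ₗ[ℝ] V) v - (σ v : V →ₗ[ℝ] V) u) :=
    fun u v => rfl
  have hTt_alt : ∀ v : V, Tt v v = 0 := fun v => by
    rw [hTt_apply, hT v]; simp
  have hTt_eta : DSATC.eta b g Tt = 0 := by
    rw [hTtdef, map_sub, hσ, sub_self]
  have hTt_trace := DSATC.trace_eq_zero_of_eta b hadj hTt_eta
  have hdecomp : ∀ u v : V, T u v = (τ u v - τ v u) + Tt u v := by
    intro u v
    rw [hτ_apply, hτ_apply, hTt_apply]; abel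
  refine ⟨(τ, Tt), ⟨fun u => (σ u).2, hTt_alt, hTt_trace, hdecomp⟩, ?_⟩
  rintro ⟨τ', T'⟩ ⟨hq1, hq2, hq3, hq4⟩
  have hd : ∀ u : V, (τ' - τ) u ∈ g := fun u => g.sub_mem (hq1 u) (σ u).2
  set σd : V →ₗ[ℝ] g := LinearMap.codRestrict g (τ' - τ) hd with hσd
  have e1 : ∀ u v : V, T' u v = T u v - (τ' u v - τ' v u) := by
    intro u v; rw [hq4 u v]; abel
  have e2 : ∀ u v : V, Tt u v = T u v - (τ u v - τ v u) := by
    intro u v; rw [hdecomp u v]; abel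
  have hdelta : DSATC.delta g σd = Tt - T' := by
    refine LinearMap.ext fun u => LinearMap.ext fun v => ?_
    rw [DSATC.delta_apply]
    have c1 : ((σd u : V →ₗ[ℝ] V)) v = τ' u v - τ u v := by
      simp [hσd, LinearMap.codRestrict]
    have c2 : ((σd v : V →ₗ[ℝ] V)) u = τ' v u - τ v u := by
      simp [hσd, LinearMap.codRestrict]
    rw [c1, c2]
    have : (Tt - T') u v = Tt u v - T' u v := rfl
    rw [this, e1 u v, e2 u v]
    abel
  have hS_trace : ∀ A ∈ g, ∀ v : V, LinearMap.trace ℝ V (A ∘ₗ (Tt - T') v) = 0 := by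
    intro A hA v
    have : (Tt - T') v = Tt v - T' v := rfl
    rw [this, LinearMap.comp_sub, map_sub, hTt_trace A hA v, hq3 A hA v, sub_self]
  have hS_eta : DSATC.eta b g (Tt - T') = 0 :=
    DSATC.eta_eq_zero_of_trace b hadj hS_trace
  have hσd0 : σd = 0 := by
    apply DSATC.sigma_eq_zero b hprol
    rw [hdelta, hS_eta]
    rfl
  have hττ : τ' = τ := by
    have : τ' - τ = 0 := by
      refine LinearMap.ext fun u => ?_
      have := congrArg (fun f => ((f : V →ₗ[ℝ] g) u : V →ₗ[ℝ] V)) hσd0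
      simpa [hσd, LinearMap.codRestrict] using this
    exact sub_eq_zero.mp this
  have hTT : T' = Tt := by
    refine LinearMap.ext fun u => LinearMap.ext fun v => ?_
    rw [e1 u v, e2 u v, hττ]
  exact Prod.ext hττ hTT
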